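/- For every k ≥ 2, there exists a constant c(k) such that every graph G with chromatic number at least c(k) has the complete graph K_k as a minor. -/

import Mathlib

open SimpleGraph

/-- `IsMinor H G` : `H` is a minor of `G`, via the branch-set definition: pairwise disjoint
nonempty connected subsets of `V(G)`, one per vertex of `H`, with an edge of `G` between the
sets corresponding to every edge of `H`. -/
def IsMinor {W V : Type} (H : SimpleGraph W) (G : SimpleGraph V) : Prop :=
  ∃ f : W → Set V,
    (∀ i, (f i).Nonempty) ∧
    (Pairwise fun i j => Disjoint (f i) (f j)) ∧
    (∀ i, (G.induce (f i)).Connected) ∧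
    (∀ i j, H.Adj i j → ∃ u ∈ f i, ∃ v ∈ f j, G.Adj u v)

/-- The graph obtained from `H` by subdividing the edge `xy`: the edge `xy` is deleted and the
new vertex `none` is adjacent exactly to `x` and `y`. -/
def SubdivideEdge {V : Type} (H : SimpleGraph V) (x y : V) : SimpleGraph (Option V) :=
  SimpleGraph.fromRel fun a b =>
    (∃ u v : V, a = some u ∧ b = some v ∧ H.Adj u v ∧ s(u, v) ≠ s(x, y)) ∨
    (a = none ∧ (b = some x ∨ b = some y))

/-- `IsSubdivision G H` : `G` can be obtained from `H` by a finite sequence of edge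
subdivisions (up to isomorphism). -/
inductive IsSubdivision : ∀ {V : Type}, SimpleGraph V → ∀ {W : Type}, SimpleGraph W → Prop
  | of_iso {V W : Type} {G : SimpleGraph V} {H : SimpleGraph W} (e : G ≃g H) :
      IsSubdivision G H
  | step {V W : Type} {G : SimpleGraph V} {H : SimpleGraph W} (x y : W) (hxy : H.Adj x y)
      (h : IsSubdivision G (SubdivideEdge H x y)) : IsSubdivision G H

/-- `H` is (isomorphic to) a subgraph of `G`. -/
def IsSubgraphCopy {W V : Type} (H : SimpleGraph W) (G : SimpleGraph V) : Prop :=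
  ∃ f : H →g G, Function.Injective f

/-- `H` is a topological minor of `G`: some subgraph of `G` is a subdivision of `H`. -/
def IsTopologicalMinor {W V : Type} (H : SimpleGraph W) (G : SimpleGraph V) : Prop :=
  ∃ (U : Type) (K : SimpleGraph U), IsSubdivision K H ∧ IsSubgraphCopy K G

/-- The maximum vertex degree `Δ(G)` of a finite graph. -/
noncomputable def maxDeg {V : Type} [Fintype V] (G : SimpleGraph V) : ℕ :=
  Finset.univ.sup fun v => (G.neighborSet v).ncard

/-- `edgeCount G A B` : the number of edges of `G` with one endpoint in `A`
and the other in `B`. -/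
noncomputable def edgeCount {V : Type} (G : SimpleGraph V) (A B : Set V) : ℕ :=
  {e ∈ G.edgeSet | ∃ u ∈ A, ∃ v ∈ B, e = s(u, v)}.ncard

/-- The Petersen graph: `(false, i)` is the outer vertex `uᵢ`, `(true, i)` is the inner
vertex `vᵢ`; edges are `uᵢuᵢ₊₁`, `uᵢvᵢ`, `vᵢvᵢ₊₂` with indices mod 5. -/
def Petersen : SimpleGraph (Bool × ZMod 5) :=
  SimpleGraph.fromRel fun a b =>
    (a.1 = false ∧ b.1 = false ∧ b.2 = a.2 + 1) ∨
    (a.1 = false ∧ b.1 = true ∧ a.2 = b.2) ∨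
    (a.1 = true ∧ b.1 = true ∧ b.2 = a.2 + 2)

/-- `G` is `k`-connected: more than `k` vertices, and deleting any set of fewer than `k`
vertices leaves a connected graph. -/
def KConnected {V : Type} [Fintype V] (k : ℕ) (G : SimpleGraph V) : Prop :=
  k < Fintype.card V ∧ ∀ S : Set V, S.ncard < k → (G.induce Sᶜ).Connected


section Helpers
variable {V : Type} {G : SimpleGraph V}

lemma reachable_induce_of_walk {s : Set V} {a b : V} (p : G.Walk a b)
    (hp : ∀ w ∈ p.support, w ∈ s) (ha : a ∈ s) (hb : b ∈ s) :
    (G.induce s).Reachable ⟨a, ha⟩ ⟨b, hb⟩ := by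
  induction p with
  | nil => rfl
  | @cons a c b h q ih =>
    have hc : c ∈ s := hp c (by simp)
    have hadj : (G.induce s).Adj ⟨a, ha⟩ ⟨c, hc⟩ := h
    exact hadj.reachable.trans (ih (fun w hw => hp w (by simp [hw])) hc hb)

noncomputable def induceInduceIso (G : SimpleGraph V) (s : Set V) (t : Set s) :
    (G.induce s).induce t ≃g G.induce (Subtype.val '' t) where
  toEquiv := Equiv.Set.image Subtype.val t Subtype.val_injective
  map_rel_iff' := Iff.rfl

lemma colorable_of_iso {W : Type} {H : SimpleGraph W} (e : G ≃g H) {n : ℕ}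
    (h : H.Colorable n) : G.Colorable n :=
  ⟨h.some.comp e.toHom⟩

lemma connected_induce_supp (K : G.ConnectedComponent) :
    (G.induce K.supp).Connected := by
  classical
  obtain ⟨v, hv⟩ := K.exists_rep
  have hvm : v ∈ K.supp := by rw [ConnectedComponent.mem_supp_iff]; exact hv
  have key : ∀ (u : V) (hu : u ∈ K.supp),
      (G.induce K.supp).Reachable ⟨v, hvm⟩ ⟨u, hu⟩ := by
    intro u hu
    have hr : G.Reachable v u := by
      rw [ConnectedComponent.mem_supp_iff] at hu
      exact ConnectedComponent.exact (hu.trans hv.symm) |>.symm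
    obtain ⟨p⟩ := hr
    refine reachable_induce_of_walk p (fun w hw => ?_) hvm hu
    rw [ConnectedComponent.mem_supp_iff, ← hv]
    exact ConnectedComponent.sound ((p.takeUntil w hw).reverse.reachable)
  have : Nonempty (K.supp : Set V) := ⟨⟨v, hvm⟩⟩
  refine ⟨fun x y => ?_⟩
  obtain ⟨x, hx⟩ := x
  obtain ⟨y, hy⟩ := y
  exact (key x hx).symm.trans (key y hy)

lemma exists_connected_subset_not_colorable {c : ℕ}
    (h : ¬ G.Colorable c) :
    ∃ D : Set V, (G.induce D).Connected ∧ ¬ (G.induce D).Colorable c := by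
  classical
  by_contra hcon
  push_neg at hcon
  apply h
  have hcol : ∀ K : G.ConnectedComponent, (G.induce K.supp).Colorable c :=
    fun K => hcon K.supp (connected_induce_supp K)
  have g : ∀ K : G.ConnectedComponent, (G.induce K.supp).Coloring (Fin c) :=
    fun K => (hcol K).some
  have gcongr : ∀ (K K' : G.ConnectedComponent) (h : K = K') (u : V)
      (hu : u ∈ K.supp) (hu' : u ∈ K'.supp), g K ⟨u, hu⟩ = g K' ⟨u, hu'⟩ := by
    intro K K' h u hu hu'; subst h; rfl
  refine ⟨Coloring.mk (fun v => g (G.connectedComponentMk v)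
    ⟨v, by rw [ConnectedComponent.mem_supp_iff]⟩) ?_⟩
  intro v w hadj
  have hvw : G.connectedComponentMk v = G.connectedComponentMk w :=
    ConnectedComponent.sound hadj.reachable
  have hv' : v ∈ (G.connectedComponentMk w).supp := by
    rw [ConnectedComponent.mem_supp_iff]; exact hvw
  beta_reduce
  rw [gcongr _ _ hvw v _ hv']
  have hind : (G.induce (G.connectedComponentMk w).supp).Adj ⟨v, hv'⟩
      ⟨w, by rw [ConnectedComponent.mem_supp_iff]⟩ := hadj
  exact (g _).valid hind

end Helpers

lemma main_lemma : ∀ (k : ℕ) (V : Type) (G : SimpleGraph V) (C : Set V),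
    ¬ (G.induce C).Colorable (2 ^ k - 1) →
    ∃ f : Fin k → Set V, (∀ i, (f i).Nonempty) ∧ (∀ i, f i ⊆ C) ∧
      (Pairwise fun i j => Disjoint (f i) (f j)) ∧
      (∀ i, (G.induce (f i)).Connected) ∧
      (∀ i j, i ≠ j → ∃ u ∈ f i, ∃ w ∈ f j, G.Adj u w) := by
  intro k
  induction k with
  | zero =>
    intro V G C _
    exact ⟨fun i => i.elim0, fun i => i.elim0, fun i => i.elim0,
      fun i => i.elim0, fun i => i.elim0, fun i => i.elim0⟩
  | succ k ih =>
    intro V G C hncol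
    classical
    have h2k : 1 ≤ 2 ^ k := Nat.one_le_two_pow
    -- Step A : pass to a connected subset
    obtain ⟨D₀, hD₀conn, hD₀ncol⟩ := exists_connected_subset_not_colorable hncol
    set D : Set V := Subtype.val '' D₀ with hDdef
    have hDconn : (G.induce D).Connected :=
      ((induceInduceIso G C D₀).connected_iff).mp hD₀conn
    have hDncol : ¬ (G.induce D).Colorable (2 ^ (k + 1) - 1) :=
      fun hc => hD₀ncol (colorable_of_iso (induceInduceIso G C D₀) hc)
    have hDC : D ⊆ C := by rintro x ⟨u, _, rfl⟩; exact u.2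
    set H : SimpleGraph ↥D := G.induce D with hHdef
    obtain ⟨v₀⟩ : Nonempty ↥D := hDconn.nonempty
    set d : ↥D → ℕ := fun u => H.dist v₀ u with hddef
    -- Step B : find a non-colorable distance level
    have hlevel : ∃ n, 1 ≤ n ∧ ¬ (H.induce {u | d u = n}).Colorable (2 ^ k - 1) := by
      by_contra hall
      push_neg at hall
      have g : ∀ n, 1 ≤ n → (H.induce {u | d u = n}).Coloring (Fin (2 ^ k - 1)) :=
        fun n hn => (hall n hn).some
      have gcongr : ∀ (n n' : ℕ) (h : n = n') (hn : 1 ≤ n) (hn' : 1 ≤ n') (u : ↥D)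
          (hu : u ∈ {u | d u = n}) (hu' : u ∈ {u | d u = n'}),
          g n hn ⟨u, hu⟩ = g n' hn' ⟨u, hu'⟩ := by
        intro n n' h hn hn' u hu hu'; subst h; rfl
      have CO : H.Coloring (Option (Bool × Fin (2 ^ k - 1))) := by
        refine Coloring.mk (fun u => if h : d u = 0 then none else
          some (decide (d u % 2 = 1), g (d u) (by omega) ⟨u, rfl⟩)) ?_
        intro u w hadj hEq
        have hwu : H.dist w u ≤ 1 := by
          have := H.dist_le hadj.symm.toWalk
          simpa using this
        have huw : H.dist u w ≤ 1 := by
          have := H.dist_le hadj.toWalk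
          simpa using this
        have h1 : d u ≤ d w + 1 :=
          le_trans (hDconn.dist_triangle (v := w)) (Nat.add_le_add_left hwu _)
        have h2 : d w ≤ d u + 1 :=
          le_trans (hDconn.dist_triangle (v := u)) (Nat.add_le_add_left huw _)
        by_cases hu0 : d u = 0 <;> by_cases hw0 : d w = 0
        · have hu' : v₀ = u := (hDconn.dist_eq_zero_iff).mp hu0
          have hw' : v₀ = w := (hDconn.dist_eq_zero_iff).mp hw0
          exact hadj.ne (hu'.symm.trans hw')
        · simp [hu0, hw0] at hEq
        · simp [hu0, hw0] at hEq
        · simp only [dif_neg hu0, dif_neg hw0, Option.some_inj, Prod.ext_iff] at hEq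
          obtain ⟨hb, hc⟩ := hEq
          by_cases heq : d u = d w
          · rw [gcongr (d u) (d w) heq (by omega) (by omega) u rfl heq] at hc
            have hind : (H.induce {x | d x = d w}).Adj ⟨u, heq⟩ ⟨w, rfl⟩ := hadj
            exact (g (d w) (by omega)).valid hind hc
          · rw [decide_eq_decide] at hb
            omega
      have hcard : Fintype.card (Option (Bool × Fin (2 ^ k - 1))) = 2 ^ (k + 1) - 1 := by
        simp only [Fintype.card_option, Fintype.card_prod, Fintype.card_bool, Fintype.card_fin]
        have : 2 ^ (k + 1) = 2 * 2 ^ k := by rw [pow_succ]; ring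
        omega
      exact hDncol (hcard ▸ CO.colorable)
    obtain ⟨n, hn1, hLncol⟩ := hlevel
    set Lsub : Set ↥D := {u | d u = n} with hLsubdef
    set L : Set V := Subtype.val '' Lsub with hLdef
    have hLncol' : ¬ (G.induce L).Colorable (2 ^ k - 1) :=
      fun hc => hLncol (colorable_of_iso (induceInduceIso G D Lsub) hc)
    obtain ⟨f, hfne, hfsub, hfdisj, hfconn, hfadj⟩ := ih V G L hLncol'
    -- the ball of radius n - 1
    set Bsub : Set ↥D := {u | d u < n} with hBsubdef
    set B : Set V := Subtype.val '' Bsub with hBdef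
    have hv₀B : v₀ ∈ Bsub := by
      show d v₀ < n
      simp only [hddef, dist_self]
      omega
    have hBconn : (G.induce B).Connected := by
      rw [← (induceInduceIso G D Bsub).connected_iff]
      have key : ∀ (u : ↥D) (hu : u ∈ Bsub),
          (H.induce Bsub).Reachable ⟨v₀, hv₀B⟩ ⟨u, hu⟩ := by
        intro u hu
        obtain ⟨p, hp⟩ := (hDconn.preconnected v₀ u).exists_walk_length_eq_dist
        refine reachable_induce_of_walk p (fun w hw => ?_) hv₀B hu
        show d w < n
        have l1 := H.dist_le (p.takeUntil w hw)
        have l2 := p.length_takeUntil_le hw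
        have l3 : p.length = d u := hp
        have e1 : d w = H.dist v₀ w := rfl
        have : d u < n := hu
        omega
      haveI : Nonempty ↥Bsub := ⟨⟨v₀, hv₀B⟩⟩
      refine ⟨fun x y => ?_⟩
      obtain ⟨x, hx⟩ := x
      obtain ⟨y, hy⟩ := y
      exact (key x hx).symm.trans (key y hy)
    -- edge from B to each branch set
    have hBL : ∀ x ∈ L, ∃ b ∈ B, G.Adj b x := by
      rintro x ⟨u', hu', rfl⟩
      have hdu : d u' = n := hu'
      have hne' : u' ≠ v₀ := by
        intro h; rw [h] at hdu
        simp only [hddef, dist_self] at hdu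
        omega
      obtain ⟨p, hp⟩ := (hDconn.preconnected v₀ u').exists_walk_length_eq_dist
      obtain ⟨w, hadj', q, hq⟩ := Walk.exists_eq_cons_of_ne hne' p.reverse
      have hql : q.length + 1 = n := by
        have := congrArg Walk.length hq
        simp only [Walk.length_reverse, Walk.length_cons] at this
        have hpl : p.length = d u' := hp
        omega
      have hdw : d w < n := by
        have := H.dist_le q.reverse
        simp only [Walk.length_reverse] at this
        show H.dist v₀ w < n
        omega
      refine ⟨w.1, ⟨w, hdw, rfl⟩, ?_⟩
      exact (hadj'.symm : G.Adj w.1 u'.1)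
    have hLD : L ⊆ D := by rintro x ⟨u, _, rfl⟩; exact u.2
    have hBD : B ⊆ D := by rintro x ⟨u, _, rfl⟩; exact u.2
    have hBLdisj : Disjoint B L := by
      rw [Set.disjoint_left]
      rintro x ⟨u, hu, rfl⟩ ⟨u', hu', hval⟩
      have : u' = u := Subtype.val_injective hval
      subst this
      have h1 : d u' < n := hu
      have h2 : d u' = n := hu'
      omega
    refine ⟨Fin.cons B f, ?_, ?_, ?_, ?_, ?_⟩
    · refine Fin.cases ?_ ?_
      · exact ⟨v₀.1, v₀, hv₀B, rfl⟩
      · intro i; simpa using hfne i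
    · refine Fin.cases ?_ ?_
      · simpa using (show B ⊆ C from fun x hx => hDC (hBD hx))
      · intro i; simpa using (show f i ⊆ C from fun x hx => hDC (hLD (hfsub i hx)))
    · intro i j hij
      induction i using Fin.cases with
      | zero =>
        induction j using Fin.cases with
        | zero => exact absurd rfl hij
        | succ j =>
          simp only [Fin.cons_zero, Fin.cons_succ]
          exact hBLdisj.mono_right (hfsub j)
      | succ i =>
        induction j using Fin.cases with
        | zero =>
          simp only [Fin.cons_zero, Fin.cons_succ]
          exact (hBLdisj.mono_right (hfsub i)).symm
        | succ j =>
          simp only [Fin.cons_succ]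
          exact hfdisj (fun h => hij (by rw [h]))
    · refine Fin.cases ?_ ?_
      · rw [Fin.cons_zero]; exact hBconn
      · intro i; rw [Fin.cons_succ]; exact hfconn i
    · intro i j hij
      induction i using Fin.cases with
      | zero =>
        induction j using Fin.cases with
        | zero => exact absurd rfl hij
        | succ j =>
          obtain ⟨x, hx⟩ := hfne j
          obtain ⟨b, hb, hadj⟩ := hBL x (hfsub j hx)
          exact ⟨b, by simpa using hb, x, by simpa using hx, hadj⟩
      | succ i =>
        induction j using Fin.cases with
        | zero =>
          obtain ⟨x, hx⟩ := hfne i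
          obtain ⟨b, hb, hadj⟩ := hBL x (hfsub i hx)
          exact ⟨x, by simpa using hx, b, by simpa using hb, hadj.symm⟩
        | succ j =>
          obtain ⟨u, hu, w, hw, hadj⟩ := hfadj i j (fun h => hij (by rw [h]))
          exact ⟨u, by simpa using hu, w, by simpa using hw, hadj⟩

/-- For every `k ≥ 2` there is a constant `c(k)` such that every graph with chromatic number
at least `c(k)` has `K_k` as a minor. -/
theorem exists_const_chromatic_forces_kk_minor (k : ℕ) (hk : 2 ≤ k) :
    ∃ c : ℕ, ∀ (V : Type) [Fintype V] [Nonempty V] (G : SimpleGraph V),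
      (c : ℕ∞) ≤ G.chromaticNumber → IsMinor (⊤ : SimpleGraph (Fin k)) G := by
  refine ⟨2 ^ k, ?_⟩
  intro V _ _ G hχ
  have h2k : 1 ≤ 2 ^ k := Nat.one_le_two_pow
  have hnc : ¬ G.Colorable (2 ^ k - 1) := by
    intro hc
    have h1 : G.chromaticNumber ≤ ((2 ^ k - 1 : ℕ) : ℕ∞) :=
      chromaticNumber_le_iff_colorable.mpr hc
    have h2 : ((2 ^ k : ℕ) : ℕ∞) ≤ ((2 ^ k - 1 : ℕ) : ℕ∞) := le_trans hχ h1
    have h3 : (2 ^ k : ℕ) ≤ 2 ^ k - 1 := by exact_mod_cast h2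
    omega
  have hnc' : ¬ (G.induce Set.univ).Colorable (2 ^ k - 1) :=
    fun hc => hnc (colorable_of_iso (induceUnivIso G).symm hc)
  obtain ⟨f, hfne, _, hfdisj, hfconn, hfadj⟩ := main_lemma k V G Set.univ hnc'
  exact ⟨f, hfne, hfdisj, hfconn, fun i j hij => hfadj i j hij.ne⟩
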